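/- Let T = ℚ[[x,y,z,w,t]]/((x) ∩ (y,z)) and let a be an element of T with a ∉ (x,y,z). Then every minimal prime ideal of the ideal (a, x) of T does not contain the ideal (y, z), and every minimal prime ideal of the ideal (a, y, z) of T does not contain the ideal (x). -/

import Mathlib

noncomputable section

/-- The power series ring `ℚ[[x,y,z,w,t]]`. -/
abbrev PS : Type := MvPowerSeries (Fin 5) ℚ

/-- The variables `x, y, z, w, t`. -/
def V (i : Fin 5) : PS := MvPowerSeries.X i

/-- The ideal `(x) ∩ (y, z)` of `ℚ[[x,y,z,w,t]]`. -/
def K : Ideal PS := Ideal.span {V 0} ⊓ Ideal.span {V 1, V 2}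

/-- The ring `T = ℚ[[x,y,z,w,t]]/((x) ∩ (y,z))`. -/
abbrev T : Type := PS ⧸ K

/-- The image of `x` in `T`. -/
def xT : T := Ideal.Quotient.mk K (V 0)
/-- The image of `y` in `T`. -/
def yT : T := Ideal.Quotient.mk K (V 1)
/-- The image of `z` in `T`. -/
def zT : T := Ideal.Quotient.mk K (V 2)


open MvPowerSeries

def killFun (S : Finset (Fin 5)) (f : PS) : PS :=
  fun m => if ∀ i ∈ S, m i = 0 then coeff m f else 0

lemma coeff_killFun (S : Finset (Fin 5)) (f : PS) (m : Fin 5 →₀ ℕ) :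
    coeff m (killFun S f) = if ∀ i ∈ S, m i = 0 then coeff m f else 0 := rfl

def kill (S : Finset (Fin 5)) : PS →+* PS where
  toFun := killFun S
  map_zero' := by
    apply MvPowerSeries.ext; intro m
    simp [coeff_killFun]
  map_add' f g := by
    apply MvPowerSeries.ext; intro m
    simp only [coeff_killFun, map_add]
    split_ifs <;> simp
  map_one' := by
    apply MvPowerSeries.ext; intro m
    rw [coeff_killFun]
    split_ifs with h
    · rfl
    · push_neg at h
      obtain ⟨i, hiS, hi⟩ := h
      rw [MvPowerSeries.coeff_one, if_neg]
      intro hm; subst hm; simp at hi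
  map_mul' f g := by
    apply MvPowerSeries.ext; intro m
    rw [coeff_killFun, MvPowerSeries.coeff_mul, MvPowerSeries.coeff_mul]
    split_ifs with h
    · refine Finset.sum_congr rfl fun p hp => ?_
      have hp' : p.1 + p.2 = m := Finset.HasAntidiagonal.mem_antidiagonal.mp hp
      have h1 : ∀ i ∈ S, p.1 i = 0 := by
        intro i hi
        have := h i hi
        rw [← hp'] at this
        simpa using (Nat.add_eq_zero.mp (by simpa using this)).1
      have h2 : ∀ i ∈ S, p.2 i = 0 := by
        intro i hi
        have := h i hi
        rw [← hp'] at this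
        simpa using (Nat.add_eq_zero.mp (by simpa using this)).2
      rw [coeff_killFun, coeff_killFun, if_pos h1, if_pos h2]
    · symm
      refine Finset.sum_eq_zero fun p hp => ?_
      have hp' : p.1 + p.2 = m := Finset.HasAntidiagonal.mem_antidiagonal.mp hp
      push_neg at h
      obtain ⟨i, hiS, hi⟩ := h
      have : p.1 i ≠ 0 ∨ p.2 i ≠ 0 := by
        by_contra hc
        push_neg at hc
        rw [← hp'] at hi
        simp [hc.1, hc.2] at hi
      rcases this with h1 | h2
      · rw [coeff_killFun, if_neg (by push_neg; exact ⟨i, hiS, h1⟩), zero_mul]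
      · rw [coeff_killFun (f := g), if_neg (by push_neg; exact ⟨i, hiS, h2⟩), mul_zero]

lemma kill_apply (S : Finset (Fin 5)) (f : PS) : kill S f = killFun S f := rfl

lemma kill_kill (A B : Finset (Fin 5)) (f : PS) :
    kill A (kill B f) = kill (A ∪ B) f := by
  apply MvPowerSeries.ext; intro m
  simp only [kill_apply, coeff_killFun]
  rw [if_congr (Finset.forall_mem_union (p := fun i => m i = 0)) rfl rfl]
  by_cases hA : ∀ i ∈ A, m i = 0 <;> by_cases hB : ∀ i ∈ B, m i = 0
  · rw [if_pos hA, if_pos hB, if_pos ⟨hA, hB⟩]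
  · rw [if_pos hA, if_neg hB, if_neg (fun h => hB h.2)]
  · rw [if_neg hA, if_neg (fun h => hA h.1)]
  · rw [if_neg hA, if_neg (fun h => hA h.1)]

lemma kill_X_of_mem {S : Finset (Fin 5)} {i : Fin 5} (h : i ∈ S) : kill S (V i) = 0 := by
  apply MvPowerSeries.ext; intro m
  simp only [kill_apply, coeff_killFun, map_zero, V]
  split_ifs with hc
  · rw [MvPowerSeries.coeff_X, if_neg]
    intro hm
    have := hc i h
    rw [hm] at this
    simp at this
  · rfl

lemma kill_X_of_not_mem {S : Finset (Fin 5)} {i : Fin 5} (h : i ∉ S) : kill S (V i) = V i := by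
  apply MvPowerSeries.ext; intro m
  simp only [kill_apply, coeff_killFun, V]
  split_ifs with hc
  · rfl
  · push_neg at hc
    obtain ⟨j, hjS, hj⟩ := hc
    rw [MvPowerSeries.coeff_X, if_neg]
    intro hm
    rw [hm] at hj
    rw [Finsupp.single_apply, if_neg] at hj
    · exact hj rfl
    · rintro rfl; exact h hjS

lemma V_ne_zero (i : Fin 5) : V i ≠ 0 := by
  intro h
  have := congrArg (coeff (R := ℚ) (Finsupp.single i 1)) h
  rw [V, MvPowerSeries.coeff_X, if_pos rfl, map_zero] at this
  exact one_ne_zero this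

def IS (S : Finset (Fin 5)) : Ideal PS := Ideal.span (V '' ↑S)

instance : IsDomain PS := NoZeroDivisors.to_isDomain _

lemma IS_le_ker (S : Finset (Fin 5)) : IS S ≤ RingHom.ker (kill S) := by
  rw [IS, Ideal.span_le]
  rintro _ ⟨i, hi, rfl⟩
  exact kill_X_of_mem (by simpa using hi)

lemma ker_le_IS (S : Finset (Fin 5)) : ∀ f : PS, kill S f = 0 → f ∈ IS S := by
  induction S using Finset.induction_on with
  | empty =>
    intro f hf
    have : f = 0 := by
      rw [← hf]
      apply MvPowerSeries.ext; intro m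
      rw [kill_apply, coeff_killFun, if_pos (by simp)]
    simp [this]
  | @insert s S' hs IH =>
    intro f hf
    have h1 : (MvPowerSeries.X s : PS) ∣ (f - kill {s} f) := by
      rw [MvPowerSeries.X_dvd_iff]
      intro m hm
      rw [map_sub, kill_apply, coeff_killFun, if_pos (by simpa using hm), sub_self]
    have h2 : kill S' (kill {s} f) = 0 := by
      rw [kill_kill, Finset.union_comm, ← Finset.insert_eq, hf]
    obtain ⟨g, hg⟩ := h1
    have hfeq : f = MvPowerSeries.X s * g + kill {s} f := by
      rw [← hg]; ring
    rw [hfeq]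
    refine Ideal.add_mem _ ?_ ?_
    · exact Ideal.mul_mem_right _ _ (Ideal.subset_span ⟨s, by simp, rfl⟩)
    · exact Ideal.span_mono (Set.image_mono (by simp)) (IH _ h2)

lemma IS_eq_ker (S : Finset (Fin 5)) : IS S = RingHom.ker (kill S) :=
  le_antisymm (IS_le_ker S) (fun f hf => ker_le_IS S f hf)

lemma IS_prime (S : Finset (Fin 5)) : (IS S).IsPrime := by
  rw [IS_eq_ker]
  exact RingHom.ker_isPrime _

lemma V_not_mem_IS {S : Finset (Fin 5)} {i : Fin 5} (h : i ∉ S) : V i ∉ IS S := by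
  rw [IS_eq_ker]
  intro hmem
  rw [RingHom.mem_ker, kill_X_of_not_mem h] at hmem
  exact V_ne_zero i hmem

lemma IS_01 : IS {0, 1} = Ideal.span {V 0, V 1} := by
  rw [IS]; congr 1
  simp [Set.image_insert_eq]

lemma IS_12 : IS {1, 2} = Ideal.span {V 1, V 2} := by
  rw [IS]; congr 1
  simp [Set.image_insert_eq]

lemma IS_0 : IS {0} = Ideal.span {V 0} := by
  rw [IS]; congr 1
  simp

lemma IS_012 : IS {0, 1, 2} = Ideal.span {V 0, V 1, V 2} := by
  rw [IS]; congr 1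
  simp [Set.image_insert_eq]

lemma prime_0 : (Ideal.span {V 0} : Ideal PS).IsPrime := IS_0 ▸ IS_prime _
lemma prime_01 : (Ideal.span {V 0, V 1} : Ideal PS).IsPrime := IS_01 ▸ IS_prime _
lemma prime_12 : (Ideal.span {V 1, V 2} : Ideal PS).IsPrime := IS_12 ▸ IS_prime _
lemma prime_012 : (Ideal.span {V 0, V 1, V 2} : Ideal PS).IsPrime := IS_012 ▸ IS_prime _

lemma V1_not_mem_0 : V 1 ∉ (Ideal.span {V 0} : Ideal PS) := IS_0 ▸ V_not_mem_IS (by decide)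
lemma V0_not_mem_12 : V 0 ∉ (Ideal.span {V 1, V 2} : Ideal PS) := IS_12 ▸ V_not_mem_IS (by decide)

lemma descent1 (A : PS) (hA : A ∉ Ideal.span {V 0, V 1}) :
    ∀ n (s : PS), s * (V 1) ^ n ∈ Ideal.span {A, V 0} → s ∈ Ideal.span {A, V 0} := by
  intro n
  induction n with
  | zero => intro s h; simpa using h
  | succ n IH =>
    intro s h
    obtain ⟨c, d, heq⟩ := Ideal.mem_span_pair.mp h
    have hc : c ∈ Ideal.span {V 0, V 1} := by
      have h1 : s * V 1 ^ (n + 1) ∈ Ideal.span {V 0, V 1} := by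
        rw [pow_succ, ← mul_assoc]
        exact Ideal.mul_mem_left _ _ (Ideal.subset_span (by simp))
      have h2 : c * A ∈ Ideal.span {V 0, V 1} := by
        have : c * A = s * V 1 ^ (n + 1) - d * V 0 := by linear_combination heq
        rw [this]
        exact Ideal.sub_mem _ h1 (Ideal.mul_mem_left _ _ (Ideal.subset_span (by simp)))
      exact (prime_01.mem_or_mem h2).resolve_right hA
    obtain ⟨c1, c2, hceq⟩ := Ideal.mem_span_pair.mp hc
    have hkey : V 1 * (s * V 1 ^ n - c2 * A) = V 0 * (c1 * A + d) := by
      linear_combination -heq - A * hceq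
    have hmem : V 1 * (s * V 1 ^ n - c2 * A) ∈ Ideal.span {V 0} := by
      rw [hkey]
      exact Ideal.mul_mem_right _ _ (Ideal.subset_span rfl)
    have hE : s * V 1 ^ n - c2 * A ∈ Ideal.span {V 0} :=
      (prime_0.mem_or_mem hmem).resolve_left V1_not_mem_0
    obtain ⟨e, he⟩ := Ideal.mem_span_singleton'.mp hE
    refine IH s (Ideal.mem_span_pair.mpr ⟨c2, e, ?_⟩)
    linear_combination he

lemma mem_span_triple {x y z w : PS} {I : Set PS} (h : I = {x, y, z}) :
    w ∈ Ideal.span I ↔ ∃ a b c, a * x + b * y + c * z = w := by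
  subst h
  rw [show ({x, y, z} : Set PS) = insert x {y, z} from rfl, Ideal.mem_span_insert]
  constructor
  · rintro ⟨a, u, hu, rfl⟩
    obtain ⟨b, c, hbc⟩ := Ideal.mem_span_pair.mp hu
    exact ⟨a, b, c, by linear_combination hbc⟩
  · rintro ⟨a, b, c, rfl⟩
    exact ⟨a, b * y + c * z, Ideal.mem_span_pair.mpr ⟨b, c, rfl⟩, by ring⟩

lemma descent2 (A : PS) (hA : A ∉ Ideal.span {V 0, V 1, V 2}) :
    ∀ n (s : PS), s * (V 0) ^ n ∈ Ideal.span {A, V 1, V 2} →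
      s ∈ Ideal.span {A, V 1, V 2} := by
  intro n
  induction n with
  | zero => intro s h; simpa using h
  | succ n IH =>
    intro s h
    obtain ⟨c, d1, d2, heq⟩ := (mem_span_triple rfl).mp h
    have hc : c ∈ Ideal.span {V 0, V 1, V 2} := by
      have h1 : s * V 0 ^ (n + 1) ∈ Ideal.span {V 0, V 1, V 2} := by
        rw [pow_succ, ← mul_assoc]
        exact Ideal.mul_mem_left _ _ (Ideal.subset_span (by simp))
      have h2 : c * A ∈ Ideal.span {V 0, V 1, V 2} := by
        have : c * A = s * V 0 ^ (n + 1) - d1 * V 1 - d2 * V 2 := by linear_combination heq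
        rw [this]
        refine Ideal.sub_mem _ (Ideal.sub_mem _ h1 ?_) ?_ <;>
          exact Ideal.mul_mem_left _ _ (Ideal.subset_span (by simp))
      exact (prime_012.mem_or_mem h2).resolve_right hA
    obtain ⟨c0, c1, c2, hceq⟩ := (mem_span_triple rfl).mp hc
    have hkey : V 0 * (s * V 0 ^ n - c0 * A) = (c1 * A + d1) * V 1 + (c2 * A + d2) * V 2 := by
      linear_combination -heq - A * hceq
    have hmem : V 0 * (s * V 0 ^ n - c0 * A) ∈ Ideal.span {V 1, V 2} := by
      rw [hkey]
      exact Ideal.mem_span_pair.mpr ⟨c1 * A + d1, c2 * A + d2, rfl⟩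
    have hE : s * V 0 ^ n - c0 * A ∈ Ideal.span {V 1, V 2} :=
      (prime_12.mem_or_mem hmem).resolve_left V0_not_mem_12
    obtain ⟨e1, e2, he⟩ := Ideal.mem_span_pair.mp hE
    refine IH s ((mem_span_triple rfl).mpr ⟨c0, e1, e2, ?_⟩)
    linear_combination he


lemma K_def : K = Ideal.span {V 0} ⊓ Ideal.span {V 1, V 2} := rfl

lemma main_aux (J : Ideal PS) (v : Fin 5)
    (hKJ : K ≤ J)
    (hdesc : ∀ n (s : PS), s * V v ^ n ∈ J → s ∈ J)
    (P : Ideal T) (hP : P ∈ (Ideal.map (Ideal.Quotient.mk K) J).minimalPrimes)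
    (hv : Ideal.Quotient.mk K (V v) ∈ P) : False := by
  have hPp : P.IsPrime := hP.1.1
  have hsurj : Function.Surjective (Ideal.Quotient.mk K) := Ideal.Quotient.mk_surjective
  set Q := P.comap (Ideal.Quotient.mk K) with hQ
  have hJQ : J ≤ Q := fun r hr => hP.1.2 (Ideal.mem_map_of_mem _ hr)
  have hdisj : Disjoint (J : Set PS) ((Q.primeCompl ⊔ Submonoid.powers (V v) : Submonoid PS) : Set PS) := by
    rw [Set.disjoint_left]
    rintro g hg hgM
    obtain ⟨sM, hsM, _, ⟨n, rfl⟩, rfl⟩ := Submonoid.mem_sup.mp hgM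
    exact hsM (hJQ (hdesc n sM hg))
  obtain ⟨q, hqp, hqle, hqd⟩ := Ideal.exists_le_prime_disjoint _ _ hdisj
  have hqQ : q ≤ Q := by
    intro r hr
    by_contra hrQ
    exact Set.disjoint_left.mp hqd hr (Submonoid.mem_sup_left hrQ)
  have hvq : V v ∉ q := fun hvq0 =>
    Set.disjoint_left.mp hqd hvq0 (Submonoid.mem_sup_right (Submonoid.mem_powers _))
  have hKq : K ≤ q := le_trans hKJ hqle
  haveI := hqp
  have hqmapp : (q.map (Ideal.Quotient.mk K)).IsPrime :=
    Ideal.map_isPrime_of_surjective hsurj (by rwa [Ideal.mk_ker])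
  have h1 : Ideal.map (Ideal.Quotient.mk K) J ≤ q.map (Ideal.Quotient.mk K) := Ideal.map_mono hqle
  have h2 : q.map (Ideal.Quotient.mk K) ≤ P :=
    le_trans (Ideal.map_mono hqQ) Ideal.map_comap_le
  have h3 : P ≤ q.map (Ideal.Quotient.mk K) := hP.2 ⟨hqmapp, h1⟩ h2
  obtain ⟨r, hrq, hrv⟩ := (Ideal.mem_map_iff_of_surjective _ hsurj).mp (h3 hv)
  have hsub : r - V v ∈ K := by
    rw [← Ideal.Quotient.eq_zero_iff_mem, map_sub, hrv, sub_self]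
  have : V v ∈ q := by
    have := q.sub_mem hrq (hKq hsub)
    simpa using this
  exact hvq this

/-- Lemma `minimals`. -/
theorem statement_3 (a : T) (ha : a ∉ Ideal.span {xT, yT, zT}) :
    (∀ P ∈ (Ideal.span {a, xT}).minimalPrimes, ¬ Ideal.span {yT, zT} ≤ P) ∧
    (∀ P ∈ (Ideal.span {a, yT, zT}).minimalPrimes, ¬ Ideal.span {xT} ≤ P) := by
  obtain ⟨A, rfl⟩ := Ideal.Quotient.mk_surjective a
  have hA : A ∉ Ideal.span {V 0, V 1, V 2} := by
    intro hmem
    apply ha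
    have h := Ideal.mem_map_of_mem (Ideal.Quotient.mk K) hmem
    rwa [Ideal.map_span, Set.image_insert_eq, Set.image_insert_eq, Set.image_singleton] at h
  have hmap1 : Ideal.map (Ideal.Quotient.mk K) (Ideal.span {A, V 0}) =
      Ideal.span {Ideal.Quotient.mk K A, xT} := by
    rw [Ideal.map_span, Set.image_insert_eq, Set.image_singleton]; rfl
  have hmap2 : Ideal.map (Ideal.Quotient.mk K) (Ideal.span {A, V 1, V 2}) =
      Ideal.span {Ideal.Quotient.mk K A, yT, zT} := by
    rw [Ideal.map_span, Set.image_insert_eq, Set.image_insert_eq, Set.image_singleton]; rfl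
  constructor
  · intro P hP hyz
    refine main_aux (Ideal.span {A, V 0}) 1 ?_ ?_ P (hmap1 ▸ hP) (hyz (Ideal.subset_span (Set.mem_insert _ _)))
    · rw [K_def]
      exact le_trans inf_le_left (Ideal.span_mono (by simp))
    · exact descent1 A (fun h => hA (Ideal.span_mono (by intro t ht; simp at ht ⊢; tauto) h))
  · intro P hP hx
    refine main_aux (Ideal.span {A, V 1, V 2}) 0 ?_ ?_ P (hmap2 ▸ hP) (hx (Ideal.subset_span rfl))
    · rw [K_def]
      refine le_trans inf_le_right (Ideal.span_mono (by intro t ht; simp at ht ⊢; tauto))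
    · exact descent2 A hA

end
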